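/- Measurings of Ω-algebras compose: if (P, ψ) is a measuring of Ω-algebras from A to B and (P', ψ') is a measuring of Ω-algebras from B to C, then P' ⊗ P with the map ψ'' = ψ' ∘ (P' ⊗ ψ) : (P' ⊗ P) ⊗ A → C is a measuring of Ω-algebras from A to C. -/

import Mathlib

open TensorProduct PiTensorProduct

/-- The `n`-th tensor power of a module. -/
abbrev tpow (k : Type*) [CommSemiring k] (A : Type*) [AddCommMonoid A] [Module k A]
    (n : ℕ) : Type _ :=
  PiTensorProduct k (fun _ : Fin n => A)

section IteratedComul

variable {k P : Type*} [Field k] [AddCommGroup P] [Module k P]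

/-- The canonical equivalence `P ⊗ P^{⊗n} ≅ P^{⊗(n+1)}`. -/
noncomputable def tpowSuccEquiv (n : ℕ) :
    (P ⊗[k] tpow k P n) ≃ₗ[k] tpow k P (n + 1) :=
  (TensorProduct.congr
      (PiTensorProduct.subsingletonEquiv (0 : Fin 1) :
        tpow k P 1 ≃ₗ[k] P).symm
      (LinearEquiv.refl k (tpow k P n))).trans
    ((PiTensorProduct.tmulEquiv k P).trans
      (PiTensorProduct.reindex k (fun _ => P)
        (finSumFinEquiv.trans (finCongr (Nat.add_comm 1 n)))))

/-- The iterated comultiplication `δ⁽ⁿ⁾ : P → P^{⊗n}` of a coalgebra `(P, δ, ε)`. -/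
noncomputable def deltaIter (δP : P →ₗ[k] P ⊗[k] P) (εP : P →ₗ[k] k) :
    (n : ℕ) → (P →ₗ[k] tpow k P n)
  | 0 => (PiTensorProduct.isEmptyEquiv (Fin 0)).symm.toLinearMap ∘ₗ εP
  | (n + 1) =>
      (tpowSuccEquiv n).toLinearMap ∘ₗ
        (LinearMap.lTensor P (deltaIter δP εP n)) ∘ₗ δP

end IteratedComul

section Omega

variable {k : Type*} [Field k]

/-- An `Ω`-algebra structure: for each operation symbol `ω` with source arity `s ω` and
target arity `t ω`, a linear structure map `A^{⊗ s ω} → A^{⊗ t ω}`. -/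
def OmegaStructure {Ω : Type*} (s t : Ω → ℕ) (k : Type*) [CommSemiring k]
    (A : Type*) [AddCommMonoid A] [Module k A] : Type _ :=
  ∀ ω : Ω, tpow k A (s ω) →ₗ[k] tpow k A (t ω)

variable {Ω : Type*} {s t : Ω → ℕ}
variable {A B P : Type*} [AddCommGroup A] [Module k A] [AddCommGroup B] [Module k B]
  [AddCommGroup P] [Module k P]

/-- A linear map is a morphism of `Ω`-algebras when `f^{⊗ t ω} ∘ ω_A = ω_B ∘ f^{⊗ s ω}`
for every operation `ω`. -/
def IsOmegaHom (opsA : OmegaStructure s t k A) (opsB : OmegaStructure s t k B)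
    (f : A →ₗ[k] B) : Prop :=
  ∀ ω : Ω,
    (PiTensorProduct.map (fun _ : Fin (t ω) => f)) ∘ₗ opsA ω
      = opsB ω ∘ₗ (PiTensorProduct.map (fun _ : Fin (s ω) => f))

/-- The `n`-th extension `ψₙ(p ⊗ a₁ ⊗ ⋯ ⊗ aₙ) = p⁽¹⁾(a₁) ⊗ ⋯ ⊗ p⁽ⁿ⁾(aₙ)` of a
measuring map `ψ : P ⊗ A → B`. -/
noncomputable def measExt (δP : P →ₗ[k] P ⊗[k] P) (εP : P →ₗ[k] k)
    (ψ : P →ₗ[k] A →ₗ[k] B) (n : ℕ) (p : P) : tpow k A n →ₗ[k] tpow k B n :=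
  PiTensorProduct.map₂ (fun _ : Fin n => ψ) (deltaIter δP εP n p)

/-- A coalgebra `(P, δP, εP)` with `ψ : P ⊗ A → B` is a measuring of `Ω`-algebras when
`ψ_{t ω}(p ⊗ ω_A(a)) = ω_B(ψ_{s ω}(p ⊗ a))` for all `ω`, `p`, `a`. -/
def IsOmegaMeasuring (opsA : OmegaStructure s t k A) (opsB : OmegaStructure s t k B)
    (δP : P →ₗ[k] P ⊗[k] P) (εP : P →ₗ[k] k) (ψ : P →ₗ[k] A →ₗ[k] B) : Prop :=
  ∀ (ω : Ω) (p : P) (x : tpow k A (s ω)),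
    measExt δP εP ψ (t ω) p (opsA ω x) = opsB ω (measExt δP εP ψ (s ω) p x)

end Omega

section Aux

open TensorProduct PiTensorProduct

variable {k : Type*} [Field k]
variable {A B C P P' : Type*} [AddCommGroup A] [Module k A] [AddCommGroup B] [Module k B]
  [AddCommGroup C] [Module k C] [AddCommGroup P] [Module k P]
  [AddCommGroup P'] [Module k P']

lemma tpowSuccEquiv_tprod (n : ℕ) (q : P) (a : Fin n → P) :
    tpowSuccEquiv (k := k) n (q ⊗ₜ[k] PiTensorProduct.tprod k a)
      = PiTensorProduct.tprod k (Fin.cons q a) := by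
  have hq : ((PiTensorProduct.subsingletonEquiv (0 : Fin 1) :
      tpow k P 1 ≃ₗ[k] P).symm q) = PiTensorProduct.tprod k (fun _ : Fin 1 => q) :=
    PiTensorProduct.subsingletonEquiv_symm_apply' _ q
  simp only [tpowSuccEquiv, LinearEquiv.trans_apply, TensorProduct.congr_tmul,
    LinearEquiv.refl_apply, hq, PiTensorProduct.tmulEquiv_apply, PiTensorProduct.reindex_tprod]
  congr 1
  funext i
  induction i using Fin.cases with
  | zero =>
      have : ((finSumFinEquiv.trans (finCongr (Nat.add_comm 1 n))).symm (0 : Fin (n+1)))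
          = Sum.inl (0 : Fin 1) := by
        rw [Equiv.symm_apply_eq]
        simp [Fin.ext_iff]
      rw [this]; rfl
  | succ j =>
      have : ((finSumFinEquiv.trans (finCongr (Nat.add_comm 1 n))).symm (Fin.succ j))
          = Sum.inr j := by
        rw [Equiv.symm_apply_eq]
        simp [Fin.ext_iff, Nat.add_comm]
      rw [this]; rfl

lemma tpowSuccEquiv_symm_tprod (n : ℕ) (v : Fin (n + 1) → P) :
    (tpowSuccEquiv (k := k) n).symm (PiTensorProduct.tprod k v)
      = v 0 ⊗ₜ[k] PiTensorProduct.tprod k (Fin.tail v) := by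
  rw [LinearEquiv.symm_apply_eq, tpowSuccEquiv_tprod, Fin.cons_self_tail]

/-- `f ⊗ g` conjugated by the succ equivalences. -/
noncomputable def phiMap (n : ℕ) (f : A →ₗ[k] B) (g : tpow k A n →ₗ[k] tpow k B n) :
    tpow k A (n + 1) →ₗ[k] tpow k B (n + 1) :=
  (tpowSuccEquiv n).toLinearMap ∘ₗ TensorProduct.map f g ∘ₗ
    (tpowSuccEquiv n).symm.toLinearMap

lemma phiMap_comp (n : ℕ) (f : A →ₗ[k] B) (f' : B →ₗ[k] C)
    (g : tpow k A n →ₗ[k] tpow k B n) (g' : tpow k B n →ₗ[k] tpow k C n) :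
    phiMap n (f' ∘ₗ f) (g' ∘ₗ g) = phiMap n f' g' ∘ₗ phiMap n f g := by
  apply LinearMap.ext; intro x
  simp [phiMap, TensorProduct.map_comp]

lemma phiMap_smul_right (n : ℕ) (f : A →ₗ[k] B) (r : k)
    (g : tpow k A n →ₗ[k] tpow k B n) :
    phiMap n f (r • g) = r • phiMap n f g := by
  have : TensorProduct.map f (r • g) = r • TensorProduct.map f g := by
    apply TensorProduct.ext'
    intro x y
    simp
  apply LinearMap.ext; intro x
  simp [phiMap, this]

lemma phiMap_add_right (n : ℕ) (f : A →ₗ[k] B)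
    (g g' : tpow k A n →ₗ[k] tpow k B n) :
    phiMap n f (g + g') = phiMap n f g + phiMap n f g' := by
  have : TensorProduct.map f (g + g') = TensorProduct.map f g + TensorProduct.map f g' := by
    apply TensorProduct.ext'
    intro x y
    simp [tmul_add]
  apply LinearMap.ext; intro x
  simp [phiMap, this]

lemma map₂_tpowSucc (n : ℕ) (ψ : P →ₗ[k] A →ₗ[k] B) (q : P) (x : tpow k P n) :
    PiTensorProduct.map₂ (fun _ : Fin (n + 1) => ψ) (tpowSuccEquiv n (q ⊗ₜ[k] x))
      = phiMap n (ψ q) (PiTensorProduct.map₂ (fun _ : Fin n => ψ) x) := by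
  induction x using PiTensorProduct.induction_on with
  | smul_tprod r a =>
      rw [TensorProduct.tmul_smul, map_smul, map_smul, map_smul, phiMap_smul_right]
      congr 1
      rw [tpowSuccEquiv_tprod]
      apply PiTensorProduct.ext
      apply MultilinearMap.ext
      intro v
      simp only [LinearMap.compMultilinearMap_apply, PiTensorProduct.map₂_tprod_tprod,
        phiMap, LinearMap.comp_apply, LinearEquiv.coe_coe, tpowSuccEquiv_symm_tprod,
        TensorProduct.map_tmul, PiTensorProduct.map₂_tprod_tprod, tpowSuccEquiv_tprod]
      congr 1
      funext i
      induction i using Fin.cases with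
      | zero => rfl
      | succ j => rfl
  | add x y hx hy =>
      rw [TensorProduct.tmul_add, map_add, map_add, map_add, hx, hy, phiMap_add_right]

/-- the canonical map `tpow A 0 → tpow B 0`. -/
noncomputable def zeroMap : tpow k A 0 →ₗ[k] tpow k B 0 :=
  (PiTensorProduct.isEmptyEquiv (Fin 0)).symm.toLinearMap ∘ₗ
    (PiTensorProduct.isEmptyEquiv (Fin 0)).toLinearMap

lemma map₂_zero_tprod (ψ : P →ₗ[k] A →ₗ[k] B) (a : Fin 0 → P) :
    PiTensorProduct.map₂ (fun _ : Fin 0 => ψ) (PiTensorProduct.tprod k a)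
      = (zeroMap : tpow k A 0 →ₗ[k] tpow k B 0) := by
  apply PiTensorProduct.ext
  apply MultilinearMap.ext
  intro v
  simp only [LinearMap.compMultilinearMap_apply, PiTensorProduct.map₂_tprod_tprod, zeroMap,
    LinearMap.comp_apply, LinearEquiv.coe_coe, PiTensorProduct.isEmptyEquiv_apply_tprod,
    PiTensorProduct.isEmptyEquiv_symm_apply, one_smul]
  congr 1
  funext i
  exact isEmptyElim i

lemma zeroMap_comp :
    (zeroMap : tpow k B 0 →ₗ[k] tpow k C 0) ∘ₗ (zeroMap : tpow k A 0 →ₗ[k] tpow k B 0)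
      = (zeroMap : tpow k A 0 →ₗ[k] tpow k C 0) := by
  apply LinearMap.ext; intro x
  simp [zeroMap]

end Aux


section Aux2

open TensorProduct PiTensorProduct

variable {k : Type*} [Field k]
variable {A B P : Type*} [AddCommGroup A] [Module k A] [AddCommGroup B] [Module k B]
  [AddCommGroup P] [Module k P]

/-- `measExt` as a linear map in `p`. -/
noncomputable def measExtL (δ : P →ₗ[k] P ⊗[k] P) (ε : P →ₗ[k] k)
    (ψ : P →ₗ[k] A →ₗ[k] B) (n : ℕ) : P →ₗ[k] tpow k A n →ₗ[k] tpow k B n :=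
  PiTensorProduct.map₂ (fun _ : Fin n => ψ) ∘ₗ deltaIter δ ε n

lemma measExtL_apply (δ : P →ₗ[k] P ⊗[k] P) (ε : P →ₗ[k] k)
    (ψ : P →ₗ[k] A →ₗ[k] B) (n : ℕ) (p : P) :
    measExtL δ ε ψ n p = measExt δ ε ψ n p := rfl

lemma measExtL_zero_apply (δ : P →ₗ[k] P ⊗[k] P) (ε : P →ₗ[k] k)
    (ψ : P →ₗ[k] A →ₗ[k] B) (p : P) :
    measExtL δ ε ψ 0 p = ε p • (zeroMap : tpow k A 0 →ₗ[k] tpow k B 0) := by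
  have h : deltaIter δ ε 0 p
      = ε p • PiTensorProduct.tprod k (isEmptyElim : ∀ i : Fin 0, P) := by
    simp [deltaIter, PiTensorProduct.isEmptyEquiv]
  rw [measExtL, LinearMap.comp_apply, h, map_smul, map₂_zero_tprod]

lemma measExtL_succ_apply (δ : P →ₗ[k] P ⊗[k] P) (ε : P →ₗ[k] k)
    (ψ : P →ₗ[k] A →ₗ[k] B) (n : ℕ) (p : P) :
    measExtL δ ε ψ (n + 1) p
      = PiTensorProduct.map₂ (fun _ : Fin (n + 1) => ψ)
          (tpowSuccEquiv n ((LinearMap.lTensor P (deltaIter δ ε n)) (δ p))) := rfl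

end Aux2

section Composition

variable {k : Type*} [Field k] {Ω : Type*} {s t : Ω → ℕ}
variable {A B C P P' : Type*} [AddCommGroup A] [Module k A] [AddCommGroup B] [Module k B]
  [AddCommGroup C] [Module k C] [AddCommGroup P] [Module k P]
  [AddCommGroup P'] [Module k P']

/-- The componentwise comultiplication on the tensor product of two coalgebras. -/
noncomputable def tensorComul (δ' : P' →ₗ[k] P' ⊗[k] P') (δ : P →ₗ[k] P ⊗[k] P) :
    (P' ⊗[k] P) →ₗ[k] (P' ⊗[k] P) ⊗[k] (P' ⊗[k] P) :=
  (TensorProduct.tensorTensorTensorComm k P' P' P P).toLinearMap ∘ₗ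
    TensorProduct.map δ' δ

/-- The componentwise counit on the tensor product of two coalgebras. -/
noncomputable def tensorCounit (ε' : P' →ₗ[k] k) (ε : P →ₗ[k] k) :
    (P' ⊗[k] P) →ₗ[k] k :=
  (TensorProduct.lid k k).toLinearMap ∘ₗ TensorProduct.map ε' ε

/-- The composite measuring map `ψ''((p' ⊗ p) ⊗ a) = ψ'(p' ⊗ ψ(p ⊗ a))`. -/
noncomputable def measComp (ψ : P →ₗ[k] A →ₗ[k] B) (ψ' : P' →ₗ[k] B →ₗ[k] C) :
    (P' ⊗[k] P) →ₗ[k] A →ₗ[k] C :=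
  TensorProduct.lift (((LinearMap.llcomp k A B C).comp ψ').compl₂ ψ)


lemma measComp_tmul (ψ : P →ₗ[k] A →ₗ[k] B) (ψ' : P' →ₗ[k] B →ₗ[k] C)
    (a : P') (c : P) : measComp ψ ψ' (a ⊗ₜ[k] c) = (ψ' a) ∘ₗ (ψ c) := rfl

lemma measExtL_comp_tmul
    (δP : P →ₗ[k] P ⊗[k] P) (εP : P →ₗ[k] k)
    (δP' : P' →ₗ[k] P' ⊗[k] P') (εP' : P' →ₗ[k] k)
    (ψ : P →ₗ[k] A →ₗ[k] B) (ψ' : P' →ₗ[k] B →ₗ[k] C) (n : ℕ) :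
    ∀ (p' : P') (p : P),
      measExtL (tensorComul δP' δP) (tensorCounit εP' εP) (measComp ψ ψ') n (p' ⊗ₜ[k] p)
        = (measExtL δP' εP' ψ' n p') ∘ₗ (measExtL δP εP ψ n p) := by
  induction n with
  | zero =>
      intro p' p
      rw [measExtL_zero_apply, measExtL_zero_apply, measExtL_zero_apply]
      have hc : tensorCounit εP' εP (p' ⊗ₜ[k] p) = εP' p' * εP p := by
        simp [tensorCounit]
      rw [hc, LinearMap.smul_comp, LinearMap.comp_smul, zeroMap_comp, smul_smul]
  | succ n ih =>
      intro p' p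
      rw [measExtL_succ_apply, measExtL_succ_apply, measExtL_succ_apply]
      have hΔ : tensorComul δP' δP (p' ⊗ₜ[k] p)
          = (TensorProduct.tensorTensorTensorComm k P' P' P P) (δP' p' ⊗ₜ[k] δP p) := by
        simp [tensorComul]
      rw [hΔ]
      generalize δP' p' = u
      generalize δP p = w
      induction u using TensorProduct.induction_on with
      | zero => simp [TensorProduct.zero_tmul]
      | add u₁ u₂ h1 h2 =>
          simp only [TensorProduct.add_tmul, map_add, LinearMap.add_comp, h1, h2]
      | tmul a b =>
          induction w using TensorProduct.induction_on with
          | zero => simp [TensorProduct.tmul_zero]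
          | add w₁ w₂ h1 h2 =>
              simp only [TensorProduct.tmul_add, map_add, LinearMap.comp_add, h1, h2]
          | tmul c d =>
              rw [TensorProduct.tensorTensorTensorComm_tmul, LinearMap.lTensor_tmul,
                LinearMap.lTensor_tmul, LinearMap.lTensor_tmul,
                map₂_tpowSucc, map₂_tpowSucc, map₂_tpowSucc, ← phiMap_comp,
                measComp_tmul]
              congr 1
              exact ih b d


/-- Measurings of `Ω`-algebras compose: if `(P, ψ)` measures from `A` to `B` and
`(P', ψ')` measures from `B` to `C`, then `(P' ⊗ P, ψ'' = ψ' ∘ (P' ⊗ ψ))`, with the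
tensor-product coalgebra structure, is a measuring of `Ω`-algebras from `A` to `C`. -/
theorem omegaMeasuring_comp
    (opsA : OmegaStructure s t k A) (opsB : OmegaStructure s t k B)
    (opsC : OmegaStructure s t k C)
    (δP : P →ₗ[k] P ⊗[k] P) (εP : P →ₗ[k] k)
    (δP' : P' →ₗ[k] P' ⊗[k] P') (εP' : P' →ₗ[k] k)
    (ψ : P →ₗ[k] A →ₗ[k] B) (ψ' : P' →ₗ[k] B →ₗ[k] C)
    (hψ : IsOmegaMeasuring opsA opsB δP εP ψ)
    (hψ' : IsOmegaMeasuring opsB opsC δP' εP' ψ') :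
    IsOmegaMeasuring opsA opsC (tensorComul δP' δP) (tensorCounit εP' εP)
      (measComp ψ ψ') := by
  intro ω z x
  show measExtL (tensorComul δP' δP) (tensorCounit εP' εP) (measComp ψ ψ') (t ω) z (opsA ω x)
      = opsC ω (measExtL (tensorComul δP' δP) (tensorCounit εP' εP) (measComp ψ ψ') (s ω) z x)
  induction z using TensorProduct.induction_on with
  | zero => simp
  | add z₁ z₂ h1 h2 => simp only [map_add, LinearMap.add_apply, h1, h2]
  | tmul p' p =>
      rw [measExtL_comp_tmul, measExtL_comp_tmul]
      simp only [LinearMap.comp_apply]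
      rw [show measExtL δP εP ψ (t ω) p (opsA ω x)
            = opsB ω (measExt δP εP ψ (s ω) p x) from hψ ω p x,
        show measExtL δP' εP' ψ' (t ω) p' (opsB ω (measExt δP εP ψ (s ω) p x))
            = opsC ω (measExt δP' εP' ψ' (s ω) p' (measExt δP εP ψ (s ω) p x))
          from hψ' ω p' (measExt δP εP ψ (s ω) p x)]
      rfl

end Composition
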